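/- For the rhombus R with vertices O(0,0), A(1,0), B(1+1/√2, 1/√2), C(1/√2, 1/√2) endowed with the uniform distribution (density √2), the distortion error of the two centroids obtained by cutting along diagonal OB equals (2√2 + 1)/(18√2), which is strictly greater than the distortion error (2√2 − 1)/(18√2) obtained by cutting along diagonal AC. Hence a region can admit two distinct centroidal Voronoi tessellations with two generators having different distortion errors. -/
import Mathlib

open intervalIntegral MeasureTheory Set

private lemma int_sq (a k c d : ℝ) :
    (∫ x in c..d, ((x - a) ^ 2 + k)) = ((d - a) ^ 3 - (c - a) ^ 3) / 3 + k * (d - c) := by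
  have h1 : (∫ x in c..d, (x - a) ^ 2) = ((d - a) ^ 3 - (c - a) ^ 3) / 3 := by
    rw [intervalIntegral.integral_comp_sub_right (fun x => x ^ 2) a, integral_pow]
    norm_num
  have hi : IntervalIntegrable (fun x : ℝ => (x - a) ^ 2) volume c d := by
    apply Continuous.intervalIntegrable; fun_prop
  rw [intervalIntegral.integral_add hi intervalIntegrable_const, h1,
    intervalIntegral.integral_const, smul_eq_mul]
  ring

private lemma int_poly (c0 c1 c2 L : ℝ) :
    (∫ y in (0:ℝ)..L, (c0 + c1 * y + c2 * y ^ 2))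
      = c0 * L + c1 * L ^ 2 / 2 + c2 * L ^ 3 / 3 := by
  have h1 : IntervalIntegrable (fun y : ℝ => c0 + c1 * y) volume 0 L := by
    apply Continuous.intervalIntegrable; fun_prop
  have h2 : IntervalIntegrable (fun y : ℝ => c2 * y ^ 2) volume 0 L := by
    apply Continuous.intervalIntegrable; fun_prop
  have h3 : IntervalIntegrable (fun y : ℝ => c1 * y) volume 0 L := by
    apply Continuous.intervalIntegrable; fun_prop
  rw [intervalIntegral.integral_add h1 h2,
    intervalIntegral.integral_add intervalIntegrable_const h3,
    intervalIntegral.integral_const, intervalIntegral.integral_const_mul,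
    intervalIntegral.integral_const_mul, integral_id, integral_pow, smul_eq_mul]
  push_cast
  ring

/-- Split an integral of a min at a point where the two branches cross,
with the second function minimal on the left. -/
private lemma split_min (f g : ℝ → ℝ) (hf : Continuous f) (hg : Continuous g)
    {c m d : ℝ} (hcm : c ≤ m) (hmd : m ≤ d)
    (h1 : ∀ x ∈ Set.Icc c m, g x ≤ f x) (h2 : ∀ x ∈ Set.Icc m d, f x ≤ g x) :
    (∫ x in c..d, min (f x) (g x)) = (∫ x in c..m, g x) + ∫ x in m..d, f x := by
  have hc : Continuous fun x => min (f x) (g x) := hf.min hg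
  rw [← intervalIntegral.integral_add_adjacent_intervals
      (hc.intervalIntegrable c m) (hc.intervalIntegrable m d)]
  congr 1
  · refine intervalIntegral.integral_congr fun x hx => ?_
    rw [Set.uIcc_of_le hcm] at hx
    exact min_eq_right (h1 x hx)
  · refine intervalIntegral.integral_congr fun x hx => ?_
    rw [Set.uIcc_of_le hmd] at hx
    exact min_eq_left (h2 x hx)

/-- Split with the first function minimal on the left. -/
private lemma split_min' (f g : ℝ → ℝ) (hf : Continuous f) (hg : Continuous g)
    {c m d : ℝ} (hcm : c ≤ m) (hmd : m ≤ d)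
    (h1 : ∀ x ∈ Set.Icc c m, f x ≤ g x) (h2 : ∀ x ∈ Set.Icc m d, g x ≤ f x) :
    (∫ x in c..d, min (f x) (g x)) = (∫ x in c..m, f x) + ∫ x in m..d, g x := by
  have hc : Continuous fun x => min (f x) (g x) := hf.min hg
  rw [← intervalIntegral.integral_add_adjacent_intervals
      (hc.intervalIntegrable c m) (hc.intervalIntegrable m d)]
  congr 1
  · refine intervalIntegral.integral_congr fun x hx => ?_
    rw [Set.uIcc_of_le hcm] at hx
    exact min_eq_left (h1 x hx)
  · refine intervalIntegral.integral_congr fun x hx => ?_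
    rw [Set.uIcc_of_le hmd] at hx
    exact min_eq_right (h2 x hx)

/-- Inner integral for the cut along diagonal OB. -/
private lemma inner_OB (s ap bp aq bq : ℝ) (hs : s ^ 2 = 2) (hs0 : 0 < s)
    (hap : ap = 2/3 + s/6) (hbp : bp = s/6) (haq : aq = 1/3 + s/3) (hbq : bq = s/3)
    {y : ℝ} (hy0 : 0 ≤ y) (hy1 : y ≤ s/2) :
    (∫ x in y..(y + 1), min ((x - ap) ^ 2 + (y - bp) ^ 2) ((x - aq) ^ 2 + (y - bq) ^ 2))
      = 2/9 + s/18 + (-1/3 - 2*s/3) * y + (4/3 + s/3) * y ^ 2 := by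
  subst hap hbp haq hbq
  have h2 : s < 2 := by nlinarith
  have hcm : y ≤ (s + 1) * y := by nlinarith
  have hmd : (s + 1) * y ≤ y + 1 := by nlinarith
  have hle1 : ∀ x ∈ Set.Icc y ((s + 1) * y),
      ((x - (1/3 + s/3)) ^ 2 + (y - s/3) ^ 2) ≤ ((x - (2/3 + s/6)) ^ 2 + (y - s/6) ^ 2) := by
    intro x hx
    have key : ((x - (2/3 + s/6)) ^ 2 + (y - s/6) ^ 2)
        - ((x - (1/3 + s/3)) ^ 2 + (y - s/3) ^ 2)
        = ((2 - s)/3) * ((s + 1) * y - x) := by linear_combination (-1/6 + y/3) * hs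
    have h4 : 0 ≤ ((2 - s)/3) * ((s + 1) * y - x) :=
      mul_nonneg (by linarith) (by linarith [hx.2])
    linarith
  have hle2 : ∀ x ∈ Set.Icc ((s + 1) * y) (y + 1),
      ((x - (2/3 + s/6)) ^ 2 + (y - s/6) ^ 2) ≤ ((x - (1/3 + s/3)) ^ 2 + (y - s/3) ^ 2) := by
    intro x hx
    have key : ((x - (2/3 + s/6)) ^ 2 + (y - s/6) ^ 2)
        - ((x - (1/3 + s/3)) ^ 2 + (y - s/3) ^ 2)
        = ((2 - s)/3) * ((s + 1) * y - x) := by linear_combination (-1/6 + y/3) * hs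
    have h4 : 0 ≤ ((2 - s)/3) * (x - (s + 1) * y) :=
      mul_nonneg (by linarith) (by linarith [hx.1])
    nlinarith [key, h4]
  rw [split_min (fun x => (x - (2/3 + s/6)) ^ 2 + (y - s/6) ^ 2)
      (fun x => (x - (1/3 + s/3)) ^ 2 + (y - s/3) ^ 2)
      (by fun_prop) (by fun_prop) hcm hmd hle1 hle2, int_sq, int_sq]
  linear_combination (1/18 - y^2/3 + s*y/6 - s*y^2/6) * hs

/-- Inner integral for the cut along diagonal AC. -/
private lemma inner_AC (s ap bp aq bq : ℝ) (hs : s ^ 2 = 2) (hs0 : 0 < s)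
    (hap : ap = 1/3 + s/6) (hbp : bp = s/6) (haq : aq = 2/3 + s/3) (hbq : bq = s/3)
    {y : ℝ} (hy0 : 0 ≤ y) (hy1 : y ≤ s/2) :
    (∫ x in y..(y + 1), min ((x - ap) ^ 2 + (y - bp) ^ 2) ((x - aq) ^ 2 + (y - bq) ^ 2))
      = 2/9 - s/18 + (1/3 - 2*s/3) * y + (4/3 - s/3) * y ^ 2 := by
  subst hap hbp haq hbq
  have h2 : s < 2 := by nlinarith
  have hcm : y ≤ 1 - (s - 1) * y := by nlinarith
  have hmd : 1 - (s - 1) * y ≤ y + 1 := by nlinarith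
  have hle1 : ∀ x ∈ Set.Icc y (1 - (s - 1) * y),
      ((x - (1/3 + s/6)) ^ 2 + (y - s/6) ^ 2) ≤ ((x - (2/3 + s/3)) ^ 2 + (y - s/3) ^ 2) := by
    intro x hx
    have key : ((x - (2/3 + s/3)) ^ 2 + (y - s/3) ^ 2)
        - ((x - (1/3 + s/6)) ^ 2 + (y - s/6) ^ 2)
        = ((2 + s)/3) * ((1 - (s - 1) * y) - x) := by linear_combination (1/6 + y/3) * hs
    have h4 : 0 ≤ ((2 + s)/3) * ((1 - (s - 1) * y) - x) :=
      mul_nonneg (by linarith) (by linarith [hx.2])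
    linarith
  have hle2 : ∀ x ∈ Set.Icc (1 - (s - 1) * y) (y + 1),
      ((x - (2/3 + s/3)) ^ 2 + (y - s/3) ^ 2) ≤ ((x - (1/3 + s/6)) ^ 2 + (y - s/6) ^ 2) := by
    intro x hx
    have key : ((x - (2/3 + s/3)) ^ 2 + (y - s/3) ^ 2)
        - ((x - (1/3 + s/6)) ^ 2 + (y - s/6) ^ 2)
        = ((2 + s)/3) * ((1 - (s - 1) * y) - x) := by linear_combination (1/6 + y/3) * hs
    have h4 : 0 ≤ ((2 + s)/3) * (x - (1 - (s - 1) * y)) :=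
      mul_nonneg (by linarith) (by linarith [hx.1])
    nlinarith [key, h4]
  rw [split_min' (fun x => (x - (1/3 + s/6)) ^ 2 + (y - s/6) ^ 2)
      (fun x => (x - (2/3 + s/3)) ^ 2 + (y - s/3) ^ 2)
      (by fun_prop) (by fun_prop) hcm hmd hle1 hle2, int_sq, int_sq]
  linear_combination (1/18 - y^2/3 + s*y/6 + s*y^2/6) * hs

/-- For the rhombus O(0,0), A(1,0), B(1+1/√2,1/√2), C(1/√2,1/√2) with uniform
distribution (density √2), the distortion error of the two centroids arising from
the cut along diagonal OB equals (2√2+1)/(18√2), that of the two centroids arising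
from the cut along diagonal AC equals (2√2−1)/(18√2), and the latter is strictly
smaller: two distinct CVTs with two generators have different distortion errors. -/
theorem rhombus_two_cvts (p q p' q' : ℝ × ℝ)
    (hp : p = ((1 / 3) * (1 + 1 / Real.sqrt 2), 1 / (3 * Real.sqrt 2)))
    (hq : q = ((1 / 3) * (Real.sqrt 2 + 2), Real.sqrt 2 / 3))
    (hp' : p' = ((1 / 3) * (2 + 1 / Real.sqrt 2), 1 / (3 * Real.sqrt 2)))
    (hq' : q' = ((1 / 3) * (Real.sqrt 2 + 1), Real.sqrt 2 / 3)) :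
    Real.sqrt 2 * (∫ y in (0:ℝ)..(1 / Real.sqrt 2), ∫ x in y..(y + 1),
        min ((x - p'.1) ^ 2 + (y - p'.2) ^ 2) ((x - q'.1) ^ 2 + (y - q'.2) ^ 2))
      = (2 * Real.sqrt 2 + 1) / (18 * Real.sqrt 2) ∧
    Real.sqrt 2 * (∫ y in (0:ℝ)..(1 / Real.sqrt 2), ∫ x in y..(y + 1),
        min ((x - p.1) ^ 2 + (y - p.2) ^ 2) ((x - q.1) ^ 2 + (y - q.2) ^ 2))
      = (2 * Real.sqrt 2 - 1) / (18 * Real.sqrt 2) ∧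
    (2 * Real.sqrt 2 - 1) / (18 * Real.sqrt 2)
      < (2 * Real.sqrt 2 + 1) / (18 * Real.sqrt 2) := by
  set s := Real.sqrt 2 with hsdef
  have hs : s ^ 2 = 2 := Real.sq_sqrt (by norm_num)
  have hs0 : 0 < s := Real.sqrt_pos.mpr (by norm_num)
  have hinv : (1 : ℝ) / s = s / 2 := by
    rw [div_eq_div_iff hs0.ne' two_ne_zero]
    linear_combination -hs
  have hap' : p'.1 = 2/3 + s/6 := by
    rw [hp']; show (1/3 : ℝ) * (2 + 1/s) = 2/3 + s/6
    rw [hinv]; ring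
  have hbp' : p'.2 = s/6 := by
    rw [hp']; show (1 : ℝ) / (3 * s) = s/6
    rw [div_eq_div_iff (by positivity) (by norm_num)]
    linear_combination (-3) * hs
  have haq' : q'.1 = 1/3 + s/3 := by
    rw [hq']; show (1/3 : ℝ) * (s + 1) = 1/3 + s/3
    ring
  have hbq' : q'.2 = s/3 := by rw [hq']
  have hap : p.1 = 1/3 + s/6 := by
    rw [hp]; show (1/3 : ℝ) * (1 + 1/s) = 1/3 + s/6
    rw [hinv]; ring
  have hbp : p.2 = s/6 := by
    rw [hp]; show (1 : ℝ) / (3 * s) = s/6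
    rw [div_eq_div_iff (by positivity) (by norm_num)]
    linear_combination (-3) * hs
  have haq : q.1 = 2/3 + s/3 := by
    rw [hq]; show (1/3 : ℝ) * (s + 2) = 2/3 + s/3
    ring
  have hbq : q.2 = s/3 := by rw [hq]
  refine ⟨?_, ?_, ?_⟩
  · have hEq : Set.EqOn
        (fun y => ∫ x in y..(y + 1),
          min ((x - p'.1) ^ 2 + (y - p'.2) ^ 2) ((x - q'.1) ^ 2 + (y - q'.2) ^ 2))
        (fun y => 2/9 + s/18 + (-1/3 - 2*s/3) * y + (4/3 + s/3) * y ^ 2)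
        (Set.uIcc 0 (s/2)) := by
      intro y hy
      rw [Set.uIcc_of_le (by linarith)] at hy
      exact inner_OB s p'.1 p'.2 q'.1 q'.2 hs hs0 hap' hbp' haq' hbq' hy.1 hy.2
    rw [hinv, intervalIntegral.integral_congr hEq, int_poly,
      eq_div_iff (by positivity)]
    linear_combination (1/2 + s + s^2/4 - s^3/2 + s^4/4) * hs
  · have hEq : Set.EqOn
        (fun y => ∫ x in y..(y + 1),
          min ((x - p.1) ^ 2 + (y - p.2) ^ 2) ((x - q.1) ^ 2 + (y - q.2) ^ 2))
        (fun y => 2/9 - s/18 + (1/3 - 2*s/3) * y + (4/3 - s/3) * y ^ 2)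
        (Set.uIcc 0 (s/2)) := by
      intro y hy
      rw [Set.uIcc_of_le (by linarith)] at hy
      exact inner_AC s p.1 p.2 q.1 q.2 hs hs0 hap hbp haq hbq hy.1 hy.2
    rw [hinv, intervalIntegral.integral_congr hEq, int_poly,
      eq_div_iff (by positivity)]
    linear_combination (-1/2 + s - s^2/4 - s^3/2 - s^4/4) * hs
  · rw [div_lt_div_iff₀ (by positivity) (by positivity)]
    nlinarith
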